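/- Let X be a locally convex topological vector space, let Z ⊂ X be a finite-faced cone, i.e. Z = {x ∈ X : p_i(x)=0 for i=1,…,μ and q_j(x) ≤ 0 for j=1,…,ν} for finitely many continuous linear functionals p_1,…,p_μ, q_1,…,q_ν on X, and let Y be a linear subspace of X that is dense in X. Then the cone Z ∩ Y is dense in Z. -/

import Mathlib

/-- Dmitruk's lemma on density of cones. Let `X` be a locally convex
topological vector space, `Z ⊆ X` a finite-faced cone, i.e.
`Z = {x : p_i x = 0 (i = 1,…,μ), q_j x ≤ 0 (j = 1,…,ν)}` for finitely many continuous
linear functionals `p_i, q_j`, and let `Y` be a dense linear subspace of `X`.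
Then the cone `Z ∩ Y` is dense in `Z`. -/
theorem finiteFacedCone_inter_dense_subspace_dense
    {X : Type*} [AddCommGroup X] [Module ℝ X] [TopologicalSpace X]
    [IsTopologicalAddGroup X] [ContinuousSMul ℝ X] [LocallyConvexSpace ℝ X]
    {μ ν : ℕ} (p : Fin μ → X →L[ℝ] ℝ) (q : Fin ν → X →L[ℝ] ℝ)
    (Y : Submodule ℝ X) (hY : Dense (Y : Set X)) :
    {x : X | (∀ i, p i x = 0) ∧ ∀ j, q j x ≤ 0} ⊆
      closure ({x : X | (∀ i, p i x = 0) ∧ ∀ j, q j x ≤ 0} ∩ (Y : Set X)) := by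
  intro z hz
  -- the combined functional map
  set T : X →L[ℝ] ((Fin μ ⊕ Fin ν) → ℝ) := ContinuousLinearMap.pi (Sum.elim p q) with hTdef
  set V : Submodule ℝ ((Fin μ ⊕ Fin ν) → ℝ) := Y.map (T : X →ₗ[ℝ] _) with hVdef
  -- every value of T lies in V, since Y is dense and V is closed (finite-dimensional)
  have hTX : ∀ x : X, T x ∈ V := by
    intro x
    have h1 : T x ∈ closure (V : Set _) :=
      map_mem_closure T.continuous (hY x) (fun y hy => Submodule.mem_map_of_mem hy)
    rwa [(Submodule.closed_of_finiteDimensional V).closure_eq] at h1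
  -- a linear right inverse `s : V → Y` of `T` restricted to `Y`
  set T' : Y →ₗ[ℝ] V :=
    ((T : X →ₗ[ℝ] _).comp Y.subtype).codRestrict V
      (fun y => show ((T : X →ₗ[ℝ] ((Fin μ ⊕ Fin ν) → ℝ)).comp Y.subtype) y ∈ V from Submodule.mem_map_of_mem y.2)
    with hT'def
  have hsurj : LinearMap.range T' = ⊤ := by
    rw [LinearMap.range_eq_top]
    rintro ⟨v, hv⟩
    obtain ⟨y, hy, rfl⟩ := hv
    exact ⟨⟨y, hy⟩, rfl⟩
  obtain ⟨s, hs⟩ := T'.exists_rightInverse_of_surjective hsurj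
  have hsT : ∀ v : V, T ((s v : Y) : X) = (v : (Fin μ ⊕ Fin ν) → ℝ) := by
    intro v
    have := congrArg (fun f => ((f v : V) : (Fin μ ⊕ Fin ν) → ℝ)) hs
    simpa [hT'def, LinearMap.codRestrict] using this
  -- the correction map
  set Φ : X → X := fun x =>
    x - ((s ⟨T x - T z, sub_mem (hTX x) (hTX z)⟩ : Y) : X) with hΦdef
  have hscont : Continuous fun v : V => ((s v : Y) : X) :=
    (Y.subtype.comp s).continuous_of_finiteDimensional
  have hΦcont : Continuous Φ := by
    apply continuous_id.sub
    exact hscont.comp ((T.continuous.sub continuous_const).subtype_mk _)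
  have hΦz : Φ z = z := by
    have h0 : s ⟨T z - T z, sub_mem (hTX z) (hTX z)⟩ = 0 := by
      rw [show (⟨T z - T z, sub_mem (hTX z) (hTX z)⟩ : V) = 0 from Subtype.ext (sub_self _)]
      exact map_zero s
    show z - _ = z
    rw [h0]
    simp
  have hmaps : Set.MapsTo Φ (Y : Set X)
      ({x : X | (∀ i, p i x = 0) ∧ ∀ j, q j x ≤ 0} ∩ (Y : Set X)) := by
    intro y hy
    have hTΦ : T (Φ y) = T z := by
      simp only [hΦdef, map_sub, hsT]
      abel
    refine ⟨⟨fun i => ?_, fun j => ?_⟩, ?_⟩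
    · have := congrFun hTΦ (Sum.inl i)
      simpa [hTdef, ContinuousLinearMap.pi_apply, hz.1 i] using this
    · have := congrFun hTΦ (Sum.inr j)
      simp only [hTdef, ContinuousLinearMap.pi_apply, Sum.elim_inr] at this
      rw [this]; exact hz.2 j
    · exact sub_mem hy (s _).2
  have := map_mem_closure hΦcont (hY z) hmaps
  rwa [hΦz] at this
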